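/- (Lemma 6.2, behavior as α → 0.) Assume H_cc ≠ 0, and fix any real μ. For every α > 0 one has h(α) ≥ logdet(I + ((P_p + α·P_c)/(α·n_ct))·H_cc H_cc†), and consequently h(α) tends to +∞ as α tends to 0 from the right. -/

import Mathlib

open Matrix Filter
open scoped ComplexOrder

noncomputable section

/-- `Mat m n` : complex `m × n` matrix. -/
abbrev Mat (m n : ℕ) := Matrix (Fin m) (Fin n) ℂ

/-- `LD M = log det (I + M)` (real part of the determinant). -/
def LD {ι : Type*} [Fintype ι] [DecidableEq ι] (M : Matrix ι ι ℂ) : ℝ :=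
  Real.log ((1 + M).det.re)

/-- real trace. -/
def rTr {ι : Type*} [Fintype ι] (M : Matrix ι ι ℂ) : ℝ := M.trace.re

/-- `G = [H_pp  H_cp]`. -/
def Gmat {npt nct npr : ℕ} (Hpp : Mat npr npt) (Hcp : Mat npr nct) :
    Matrix (Fin npr) (Fin npt ⊕ Fin nct) ℂ :=
  fromCols Hpp Hcp

/-- `G_α = [H_pp  H_cp/√α]`. -/
def Galpha {npt nct npr : ℕ} (Hpp : Mat npr npt) (Hcp : Mat npr nct) (α : ℝ) :
    Matrix (Fin npr) (Fin npt ⊕ Fin nct) ℂ :=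
  fromCols Hpp (((Real.sqrt α : ℂ))⁻¹ • Hcp)

/-- The achievable region `R_in`. -/
def Rin {npt nct npr ncr : ℕ} (Hpp : Mat npr npt) (Hcp : Mat npr nct) (Hcc : Mat ncr nct)
    (Pp Pc : ℝ) : Set (ℝ × ℝ) :=
  closure (convexHull ℝ
    {R : ℝ × ℝ | 0 ≤ R.1 ∧ 0 ≤ R.2 ∧
      ∃ (Sp : Mat npt npt) (Scp Scc : Mat nct nct) (Q : Mat npt nct),
        Sp.PosSemidef ∧ Scp.PosSemidef ∧ Scc.PosSemidef ∧
        (fromBlocks Sp Q Qᴴ Scp).PosSemidef ∧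
        rTr Sp ≤ Pp ∧ rTr Scp + rTr Scc ≤ Pc ∧
        R.1 ≤ LD (Gmat Hpp Hcp * fromBlocks Sp Q Qᴴ Scp * (Gmat Hpp Hcp)ᴴ
                  + Hcp * Scc * Hcpᴴ)
              - LD (Hcp * Scc * Hcpᴴ) ∧
        R.2 ≤ LD (Hcc * Scc * Hccᴴ)})

/-- The partial outer bound region `R_part,out^α`. -/
def Rpart {npt nct npr ncr : ℕ} (Hpp : Mat npr npt) (Hcp : Mat npr nct) (Hcc : Mat ncr nct)
    (Pp Pc : ℝ) (α : ℝ) : Set (ℝ × ℝ) :=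
  closure (convexHull ℝ
    {R : ℝ × ℝ | 0 ≤ R.1 ∧ 0 ≤ R.2 ∧
      ∃ (Qp : Matrix (Fin npt ⊕ Fin nct) (Fin npt ⊕ Fin nct) ℂ) (Scc : Mat nct nct),
        Qp.PosSemidef ∧ Scc.PosSemidef ∧
        rTr Qp + rTr Scc ≤ Pp + α * Pc ∧
        R.1 ≤ LD (Galpha Hpp Hcp α * Qp * (Galpha Hpp Hcp α)ᴴ
                  + ((α : ℂ))⁻¹ • (Hcp * Scc * Hcpᴴ))
              - LD (((α : ℂ))⁻¹ • (Hcp * Scc * Hcpᴴ)) ∧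
        R.2 ≤ LD (((α : ℂ))⁻¹ • (Hcc * Scc * Hccᴴ))})

/-- Tuples in `R_ach,rate` (no power constraints). -/
def RachRate {npt nct npr ncr : ℕ} (Hpp : Mat npr npt) (Hcp : Mat npr nct) (Hcc : Mat ncr nct)
    (Rp Rc : ℝ) (Sp : Mat npt npt) (Scp Scc : Mat nct nct) (Q : Mat npt nct) : Prop :=
  0 ≤ Rp ∧ 0 ≤ Rc ∧ Sp.PosSemidef ∧ Scp.PosSemidef ∧ Scc.PosSemidef ∧
  (fromBlocks Sp Q Qᴴ Scp).PosSemidef ∧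
  Rp ≤ LD (Gmat Hpp Hcp * fromBlocks Sp Q Qᴴ Scp * (Gmat Hpp Hcp)ᴴ + Hcp * Scc * Hcpᴴ)
        - LD (Hcp * Scc * Hcpᴴ) ∧
  Rc ≤ LD (Hcc * Scc * Hccᴴ)

/-- The Lagrangian `L`. -/
def Lfun {npt nct : ℕ} (Pp Pc μ Rp Rc : ℝ) (Sp : Mat npt npt) (Scp Scc : Mat nct nct)
    (l1 l2 : ℝ) : ℝ :=
  μ * Rp + Rc - l1 * (rTr Sp - Pp) - l2 * (rTr Scp + rTr Scc - Pc)

/-- The Lagrangian `L₁`. -/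
def L1fun {npt nct : ℕ} (Pp Pc μ Rp Rc : ℝ) (Sp : Mat npt npt) (Scp Scc : Mat nct nct)
    (l α : ℝ) : ℝ :=
  μ * Rp + Rc - l * (rTr Sp + α * rTr Scp + α * rTr Scc - Pp - α * Pc)

/-- `K = [0  H_cc/√α]`. -/
def Kmat (npt : ℕ) {nct ncr : ℕ} (Hcc : Mat ncr nct) (α : ℝ) :
    Matrix (Fin ncr) (Fin npt ⊕ Fin nct) ℂ :=
  fromCols 0 (((Real.sqrt α : ℂ))⁻¹ • Hcc)

/-- `K̄ = [[H_pp, H_cp/√α],[0, H_cc/√α]]`. -/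
def Kbar {npt nct npr ncr : ℕ} (Hpp : Mat npr npt) (Hcp : Mat npr nct) (Hcc : Mat ncr nct)
    (α : ℝ) : Matrix (Fin npr ⊕ Fin ncr) (Fin npt ⊕ Fin nct) ℂ :=
  fromBlocks Hpp (((Real.sqrt α : ℂ))⁻¹ • Hcp) 0 (((Real.sqrt α : ℂ))⁻¹ • Hcc)

/-- The region `R₁^α` (licensed user encoded first). -/
def R1reg {npt nct npr ncr : ℕ} (Hpp : Mat npr npt) (Hcp : Mat npr nct) (Hcc : Mat ncr nct)
    (Pp Pc : ℝ) (α : ℝ) : Set (ℝ × ℝ) :=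
  closure (convexHull ℝ
    {R : ℝ × ℝ | 0 ≤ R.1 ∧ 0 ≤ R.2 ∧
      ∃ Qp Qc : Matrix (Fin npt ⊕ Fin nct) (Fin npt ⊕ Fin nct) ℂ,
        Qp.PosSemidef ∧ Qc.PosSemidef ∧ rTr Qp + rTr Qc ≤ Pp + α * Pc ∧
        R.1 ≤ LD (Galpha Hpp Hcp α * Qp * (Galpha Hpp Hcp α)ᴴ
                  + Galpha Hpp Hcp α * Qc * (Galpha Hpp Hcp α)ᴴ)
              - LD (Galpha Hpp Hcp α * Qc * (Galpha Hpp Hcp α)ᴴ) ∧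
        R.2 ≤ LD (Kmat npt Hcc α * Qc * (Kmat npt Hcc α)ᴴ)})

/-- The region `R₂^α` (cognitive user encoded first). -/
def R2reg {npt nct npr ncr : ℕ} (Hpp : Mat npr npt) (Hcp : Mat npr nct) (Hcc : Mat ncr nct)
    (Pp Pc : ℝ) (α : ℝ) : Set (ℝ × ℝ) :=
  closure (convexHull ℝ
    {R : ℝ × ℝ | 0 ≤ R.1 ∧ 0 ≤ R.2 ∧
      ∃ Qp Qc : Matrix (Fin npt ⊕ Fin nct) (Fin npt ⊕ Fin nct) ℂ,
        Qp.PosSemidef ∧ Qc.PosSemidef ∧ rTr Qp + rTr Qc ≤ Pp + α * Pc ∧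
        R.1 ≤ LD (Galpha Hpp Hcp α * Qp * (Galpha Hpp Hcp α)ᴴ) ∧
        R.2 ≤ LD (Kmat npt Hcc α * Qp * (Kmat npt Hcc α)ᴴ
                  + Kmat npt Hcc α * Qc * (Kmat npt Hcc α)ᴴ)
              - LD (Kmat npt Hcc α * Qp * (Kmat npt Hcc α)ᴴ)})

/-- The dirty-paper-coding region `D^α`. -/
def Dreg {npt nct npr ncr : ℕ} (Hpp : Mat npr npt) (Hcp : Mat npr nct) (Hcc : Mat ncr nct)
    (Pp Pc : ℝ) (α : ℝ) : Set (ℝ × ℝ) :=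
  closure (convexHull ℝ
    (R1reg Hpp Hcp Hcc Pp Pc α ∪ R2reg Hpp Hcp Hcc Pp Pc α))

/-- `Σ_z = [[I, Q_z],[Q_z†, I]]`. -/
def Sigmaz {npr ncr : ℕ} (Qz : Mat npr ncr) :
    Matrix (Fin npr ⊕ Fin ncr) (Fin npr ⊕ Fin ncr) ℂ :=
  fromBlocks 1 Qz Qzᴴ 1

/-- The outer bound region `R_out^{α,Σ_z}`. -/
def Rout {npt nct npr ncr : ℕ} (Hpp : Mat npr npt) (Hcp : Mat npr nct) (Hcc : Mat ncr nct)
    (Pp Pc : ℝ) (α : ℝ) (Qz : Mat npr ncr) : Set (ℝ × ℝ) :=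
  closure (convexHull ℝ
    {R : ℝ × ℝ | 0 ≤ R.1 ∧ 0 ≤ R.2 ∧
      ∃ Qp Qc : Matrix (Fin npt ⊕ Fin nct) (Fin npt ⊕ Fin nct) ℂ,
        Qp.PosSemidef ∧ Qc.PosSemidef ∧ rTr Qp + rTr Qc ≤ Pp + α * Pc ∧
        R.1 ≤ LD (Galpha Hpp Hcp α * Qp * (Galpha Hpp Hcp α)ᴴ
                  + Galpha Hpp Hcp α * Qc * (Galpha Hpp Hcp α)ᴴ)
              - LD (Galpha Hpp Hcp α * Qc * (Galpha Hpp Hcp α)ᴴ) ∧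
        R.2 ≤ Real.log ((Sigmaz Qz + Kbar Hpp Hcp Hcc α * Qc * (Kbar Hpp Hcp Hcc α)ᴴ).det.re)
              - Real.log ((Sigmaz Qz).det.re)})


section AuxLemmas

variable {ι : Type*} [Fintype ι] [DecidableEq ι]

lemma psd_smul_one {c : ℝ} (hc : 0 ≤ c) :
    ((c : ℂ) • (1 : Matrix ι ι ℂ)).PosSemidef := by
  have h := Matrix.posSemidef_self_mul_conjTranspose
    (((Real.sqrt c : ℝ) : ℂ) • (1 : Matrix ι ι ℂ))
  have : (((Real.sqrt c : ℝ) : ℂ) • (1 : Matrix ι ι ℂ)) *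
      (((Real.sqrt c : ℝ) : ℂ) • (1 : Matrix ι ι ℂ))ᴴ = (c : ℂ) • 1 := by
    rw [conjTranspose_smul, conjTranspose_one, smul_mul_assoc, mul_smul_comm, one_mul,
      smul_smul]
    congr 1
    rw [Complex.star_def, Complex.conj_ofReal, ← Complex.ofReal_mul,
      Real.mul_self_sqrt hc]
  rwa [this] at h

lemma det_one_add_smul_eq (A : Matrix ι ι ℂ) (hA : A.IsHermitian) (c : ℝ) :
    (1 + (c : ℂ) • A).det = ((∏ i, (1 + c * hA.eigenvalues i) : ℝ) : ℂ) := by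
  set U := (hA.eigenvectorUnitary : Matrix ι ι ℂ) with hUdef
  have hU : U * star U = 1 := (Matrix.mem_unitaryGroup_iff).mp hA.eigenvectorUnitary.2
  have key : 1 + (c : ℂ) • A
      = U * (1 + (c : ℂ) • diagonal (RCLike.ofReal ∘ hA.eigenvalues)) * star U := by
    conv_lhs => rw [hA.spectral_theorem, Unitary.conjStarAlgAut_apply]
    rw [mul_add, add_mul, mul_one, hU, mul_smul_comm, smul_mul_assoc, ← hUdef]
  rw [key, det_mul_right_comm, hU, one_mul]
  have : (1 : Matrix ι ι ℂ) + (c : ℂ) • diagonal (RCLike.ofReal ∘ hA.eigenvalues)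
      = diagonal (fun i => (1 : ℂ) + c * hA.eigenvalues i) := by
    rw [← diagonal_one, ← diagonal_smul, ← diagonal_add]
    congr 1
  rw [this, det_diagonal]
  push_cast
  rfl


lemma det_one_add_smul_re (A : Matrix ι ι ℂ) (hA : A.IsHermitian) (c : ℝ) :
    (1 + (c : ℂ) • A).det.re = ∏ i, (1 + c * hA.eigenvalues i) := by
  rw [det_one_add_smul_eq A hA c, Complex.ofReal_re]

lemma LD_smul_lower (A : Matrix ι ι ℂ) (hA : A.PosSemidef) {c : ℝ} (hc : 0 ≤ c) (j : ι) :
    Real.log (1 + c * hA.1.eigenvalues j) ≤ LD ((c : ℂ) • A) := by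
  have hfac : ∀ i ∈ Finset.univ, (1 : ℝ) ≤ 1 + c * hA.1.eigenvalues i := by
    intro i _
    nlinarith [hA.eigenvalues_nonneg i]
  have hpos : 0 < 1 + c * hA.1.eigenvalues j := lt_of_lt_of_le one_pos (hfac j (Finset.mem_univ j))
  have hrest : (1 : ℝ) ≤ ∏ i ∈ Finset.univ.erase j, (1 + c * hA.1.eigenvalues i) := by
    calc (1 : ℝ) = ∏ _i ∈ Finset.univ.erase j, (1 : ℝ) := by rw [Finset.prod_const_one]
    _ ≤ _ := Finset.prod_le_prod (fun i _ => zero_le_one)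
        (fun i hi => hfac i (Finset.mem_univ i))
  have hle : 1 + c * hA.1.eigenvalues j ≤ ∏ i, (1 + c * hA.1.eigenvalues i) := by
    rw [← Finset.mul_prod_erase Finset.univ _ (Finset.mem_univ j)]
    exact le_mul_of_one_le_right hpos.le hrest
  unfold LD
  rw [det_one_add_smul_re A hA.1 c]
  exact Real.log_le_log hpos hle

lemma LD_smul_nonneg (A : Matrix ι ι ℂ) (hA : A.PosSemidef) {c : ℝ} (hc : 0 ≤ c) :
    0 ≤ LD ((c : ℂ) • A) := by
  unfold LD
  rw [det_one_add_smul_re A hA.1 c]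
  apply Real.log_nonneg
  calc (1 : ℝ) = ∏ _i : ι, (1 : ℝ) := by rw [Finset.prod_const_one]
  _ ≤ _ := Finset.prod_le_prod (fun i _ => zero_le_one)
      (fun i _ => by nlinarith [hA.eigenvalues_nonneg i])

lemma exists_pos_eigenvalue (A : Matrix ι ι ℂ) (hA : A.PosSemidef) (hA0 : A ≠ 0) :
    ∃ j, 0 < hA.1.eigenvalues j := by
  by_contra h
  push_neg at h
  have hz : ∀ j, hA.1.eigenvalues j = 0 := fun j =>
    le_antisymm (h j) (hA.eigenvalues_nonneg j)
  apply hA0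
  have := hA.1.spectral_theorem
  have hd : diagonal (RCLike.ofReal ∘ hA.1.eigenvalues) = (0 : Matrix ι ι ℂ) := by
    ext i k
    simp [Matrix.diagonal_apply, hz]
  rw [this, hd, map_zero]

end AuxLemmas

theorem statement7 {npt nct npr ncr : ℕ}
    (hnpt : 0 < npt) (hnct : 0 < nct) (hnpr : 0 < npr) (hncr : 0 < ncr)
    (Hpp : Mat npr npt) (Hcp : Mat npr nct) (Hcc : Mat ncr nct) (hHcc : Hcc ≠ 0)
    (Pp Pc : ℝ) (hPp : 0 < Pp) (hPc : 0 < Pc) (μ : ℝ) :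
    (∀ α : ℝ, 0 < α →
      ((LD (((((Pp + α * Pc) / (α * nct) : ℝ)) : ℂ) • (Hcc * Hccᴴ)) : ℝ) : EReal) ≤
        ⨆ R ∈ Rpart Hpp Hcp Hcc Pp Pc α, ((μ * R.1 + R.2 : ℝ) : EReal))
    ∧
    Tendsto (fun α : ℝ => ⨆ R ∈ Rpart Hpp Hcp Hcc Pp Pc α, ((μ * R.1 + R.2 : ℝ) : EReal))
      (nhdsWithin 0 (Set.Ioi 0)) (nhds (⊤ : EReal)) := by
  have hA : (Hcc * Hccᴴ).PosSemidef := Matrix.posSemidef_self_mul_conjTranspose Hcc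
  have hA0 : Hcc * Hccᴴ ≠ 0 := fun h => hHcc (Matrix.self_mul_conjTranspose_eq_zero.mp h)
  obtain ⟨j, hj⟩ := exists_pos_eigenvalue _ hA hA0
  have hnctR : (0 : ℝ) < (nct : ℝ) := by exact_mod_cast hnct
  have key : ∀ α : ℝ, 0 < α →
      ((LD (((((Pp + α * Pc) / (α * nct) : ℝ)) : ℂ) • (Hcc * Hccᴴ)) : ℝ) : EReal) ≤
        ⨆ R ∈ Rpart Hpp Hcp Hcc Pp Pc α, ((μ * R.1 + R.2 : ℝ) : EReal) := by
    intro α hα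
    set c : ℝ := (Pp + α * Pc) / (α * nct) with hc
    set c' : ℝ := (Pp + α * Pc) / nct with hc'
    have hsum : (0 : ℝ) < Pp + α * Pc := by nlinarith
    have hc'pos : 0 < c' := div_pos hsum hnctR
    have hcpos : 0 < c := div_pos hsum (by positivity)
    set R0 : ℝ × ℝ := (0, LD ((c : ℂ) • (Hcc * Hccᴴ))) with hR0
    have hmem : R0 ∈ Rpart Hpp Hcp Hcc Pp Pc α := by
      apply subset_closure
      apply subset_convexHull
      refine ⟨le_refl 0, LD_smul_nonneg _ hA hcpos.le, 0, (c' : ℂ) • 1,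
        Matrix.PosSemidef.zero, psd_smul_one hc'pos.le, ?_, ?_, ?_⟩
      · have htr : rTr ((0 : Matrix (Fin npt ⊕ Fin nct) (Fin npt ⊕ Fin nct) ℂ))
            + rTr ((c' : ℂ) • (1 : Mat nct nct)) = c' * nct := by
          simp [rTr, Matrix.trace_smul, Matrix.trace_one]
        rw [htr, hc']
        rw [div_mul_cancel₀ _ (ne_of_gt hnctR)]
      · have hz : Galpha Hpp Hcp α * (0 : Matrix (Fin npt ⊕ Fin nct) (Fin npt ⊕ Fin nct) ℂ)
            * (Galpha Hpp Hcp α)ᴴ = 0 := by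
          rw [Matrix.mul_zero, Matrix.zero_mul]
        rw [hz, zero_add]
        simp [hR0]
      · have hmatrix : ((α : ℂ))⁻¹ • (Hcc * ((c' : ℂ) • (1 : Mat nct nct)) * Hccᴴ)
            = (c : ℂ) • (Hcc * Hccᴴ) := by
          rw [Matrix.mul_smul, Matrix.mul_one, Matrix.smul_mul, smul_smul]
          congr 1
          rw [show ((α : ℂ))⁻¹ = ((α⁻¹ : ℝ) : ℂ) by push_cast; ring,
            ← Complex.ofReal_mul]
          congr 1
          rw [hc, hc']
          field_simp
        rw [hmatrix]
    have heq : ((LD ((c : ℂ) • (Hcc * Hccᴴ)) : ℝ) : EReal)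
        = ((μ * R0.1 + R0.2 : ℝ) : EReal) := by
      simp [hR0]
    rw [heq]
    exact le_iSup₂ (f := fun (R : ℝ × ℝ) (_ : R ∈ Rpart Hpp Hcp Hcc Pp Pc α) =>
      ((μ * R.1 + R.2 : ℝ) : EReal)) R0 hmem
  refine ⟨key, ?_⟩
  rw [EReal.tendsto_nhds_top_iff_real]
  intro x
  have hC : (0 : ℝ) < (Pp + 0 * Pc) / (nct : ℝ) := by
    rw [zero_mul, add_zero]; exact div_pos hPp hnctR
  have h1 : Tendsto (fun α : ℝ => (Pp + α * Pc) / (nct : ℝ)) (nhdsWithin 0 (Set.Ioi 0))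
      (nhds ((Pp + 0 * Pc) / (nct : ℝ))) := by
    have hcont : Continuous (fun α : ℝ => (Pp + α * Pc) / (nct : ℝ)) := by
      exact (continuous_const.add (continuous_id.mul continuous_const)).div_const _
    exact (hcont.tendsto 0).mono_left nhdsWithin_le_nhds
  have h2 : Tendsto (fun α : ℝ => α⁻¹) (nhdsWithin 0 (Set.Ioi 0)) atTop :=
    tendsto_inv_nhdsGT_zero
  have h3 : Tendsto (fun α : ℝ => (Pp + α * Pc) / (α * nct)) (nhdsWithin 0 (Set.Ioi 0))
      atTop := by
    apply ((h1.pos_mul_atTop hC h2).congr' _)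
    filter_upwards [self_mem_nhdsWithin] with α hα
    show (Pp + α * Pc) / (nct : ℝ) * α⁻¹ = (Pp + α * Pc) / (α * nct)
    rw [← div_eq_mul_inv, div_div, mul_comm ((nct : ℝ)) α]
  have hlog : Tendsto (fun α : ℝ =>
      Real.log (1 + ((Pp + α * Pc) / (α * nct)) * hA.1.eigenvalues j))
        (nhdsWithin 0 (Set.Ioi 0)) atTop := by
    apply Real.tendsto_log_atTop.comp
    exact tendsto_atTop_add_const_left _ 1 (h3.atTop_mul_const hj)
  filter_upwards [hlog.eventually (eventually_gt_atTop x), self_mem_nhdsWithin] with α hxα hα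
  have hα0 : (0 : ℝ) < α := hα
  calc (x : EReal) < ((Real.log (1 + ((Pp + α * Pc) / (α * nct)) * hA.1.eigenvalues j) : ℝ)
        : EReal) := by exact_mod_cast hxα
    _ ≤ ((LD (((((Pp + α * Pc) / (α * nct) : ℝ)) : ℂ) • (Hcc * Hccᴴ)) : ℝ) : EReal) := by
        exact_mod_cast LD_smul_lower _ hA (le_of_lt (div_pos (by nlinarith) (by positivity))) j
    _ ≤ _ := key α hα0

end
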